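/- Let 0 ≤ k₁ < k₂ and a > 0 be real numbers. For every integer n ≥ 1 define the measure μₙ = (1 − 1/n)·δ_{k₁} + (1/n)·δ_{k₂ + n·a} on [0,∞), where δ_x is the Dirac measure at x. Then μₙ is a Borel probability measure on [0,∞) satisfying ∫ max(0, x − k₂) dμₙ(x) = a and ∫ max(0, x − k₁) dμₙ(x) = a + (k₂ − k₁)/n. In particular, (μₙ) is a feasible minimizing sequence whose objective values converge to a. -/

import Mathlib

open MeasureTheory

/-- The explicit minimizing sequence `μₙ = (1 - 1/n)·δ_{k₁} + (1/n)·δ_{k₂ + n·a}`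
from the proof of the Proposition of Section 3.2. -/
theorem minimizing_sequence_feasible
    (k₁ k₂ a : ℝ) (hk₁ : 0 ≤ k₁) (hk : k₁ < k₂) (ha : 0 < a)
    (n : ℕ) (hn : 1 ≤ n)
    (μ : Measure ℝ)
    (hμ : μ = ENNReal.ofReal (1 - 1 / (n : ℝ)) • Measure.dirac k₁ +
          ENNReal.ofReal (1 / (n : ℝ)) • Measure.dirac (k₂ + n * a)) :
    IsProbabilityMeasure μ ∧
    μ (Set.Iio 0) = 0 ∧
    ∫ x, max 0 (x - k₂) ∂μ = a ∧
    ∫ x, max 0 (x - k₁) ∂μ = a + (k₂ - k₁) / n := by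
  have hn0 : (0:ℝ) < n := by exact_mod_cast hn
  have h1 : (0:ℝ) ≤ 1 - 1 / n := by
    have : (1:ℝ) / n ≤ 1 := by
      rw [div_le_one hn0]; exact_mod_cast hn
    linarith
  have h2 : (0:ℝ) ≤ 1 / n := by positivity
  have hx2 : (0:ℝ) ≤ k₂ + n * a := by nlinarith
  have hint : ∀ (k x : ℝ) (c : ENNReal),
      ∫ y, max 0 (y - k) ∂(c • Measure.dirac x) = c.toReal * max 0 (x - k) := by
    intro k x c
    rw [integral_smul_measure, integral_dirac, smul_eq_mul]
  have hcont : ∀ k : ℝ, StronglyMeasurable fun y : ℝ => max 0 (y - k) := by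
    intro k
    exact (continuous_const.max (continuous_id.sub continuous_const)).stronglyMeasurable
  have hintg : ∀ (k x : ℝ) (c : ENNReal), c ≠ ⊤ →
      Integrable (fun y : ℝ => max 0 (y - k)) (c • Measure.dirac x) := by
    intro k x c hc
    refine Integrable.smul_measure ?_ hc
    refine ⟨(hcont k).aestronglyMeasurable, ?_⟩
    rw [hasFiniteIntegral_iff_norm, lintegral_dirac' _ (by measurability)]
    exact ENNReal.ofReal_lt_top
  have hI : ∀ k : ℝ, ∫ x, max 0 (x - k) ∂μ =
      (1 - 1 / n) * max 0 (k₁ - k) + (1 / n) * max 0 (k₂ + n * a - k) := by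
    intro k
    rw [hμ, integral_add_measure (hintg k k₁ _ ENNReal.ofReal_ne_top)
      (hintg k (k₂ + n * a) _ ENNReal.ofReal_ne_top), hint, hint,
      ENNReal.toReal_ofReal h1, ENNReal.toReal_ofReal h2]
  refine ⟨?_, ?_, ?_, ?_⟩
  · constructor
    rw [hμ]
    simp only [Measure.add_apply, Measure.smul_apply, measure_univ, smul_eq_mul, mul_one]
    rw [← ENNReal.ofReal_add h1 h2]
    norm_num
  · rw [hμ]
    simp [Measure.smul_apply, Measure.dirac_apply, Set.indicator_apply,
      not_lt.2 hk₁, not_lt.2 hx2]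
  · rw [hI]
    rw [max_eq_left (by linarith), max_eq_right (by nlinarith)]
    field_simp
    ring
  · rw [hI]
    rw [max_eq_left (by linarith), max_eq_right (by nlinarith)]
    field_simp
    ring
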